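/- Let K be a perfect field of characteristic p > 0 and V ⊂ K̄ a finite 𝔽_p-subspace stable under Gal(K̄/K). Then T(x) := ∏_{α∈V}(x−α) is an additive polynomial with coefficients in K: T(x) = Σ_{i=0}^n a_i x^{p^i} with a_i ∈ K and a₀ ≠ 0. -/

import Mathlib

open Polynomial

lemma key_lemma (L : Type) [Field L] (p : ℕ) [Fact p.Prime] [CharP L p] (N : ℕ) :
    ∀ V : Finset L, V.card = N → (0 : L) ∈ V →
    (∀ x ∈ V, ∀ y ∈ V, x + y ∈ V) →
    ∃ (n : ℕ) (b : ℕ → L),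
      ∏ α ∈ V, (X - C α) = ∑ i ∈ Finset.range (n + 1), C (b i) * X ^ (p ^ i) := by
  classical
  induction N using Nat.strong_induction_on with
  | _ N ih =>
  intro V hcard hzero hadd
  have hp2 : 2 ≤ p := (Fact.out : p.Prime).two_le
  by_cases htriv : ∀ x ∈ V, x = 0
  · have hV : V = {0} := by
      apply Finset.eq_of_subset_of_card_le
      · intro x hx; simp [htriv x hx]
      · exact Finset.one_le_card.mpr ⟨0, hzero⟩
    refine ⟨0, fun _ => 1, ?_⟩
    simp [hV]
  · push_neg at htriv
    obtain ⟨β, hβV, hβ0⟩ := htriv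
    set c : L := β ^ (p - 1) with hc
    set f : L → L := fun x => x ^ p - c * x with hf
    have hfadd : ∀ x y : L, f (x + y) = f x + f y := by
      intro x y
      simp only [hf, add_pow_char]
      ring
    have hfβ : f β = 0 := by
      simp only [hf, hc]
      rw [← pow_succ, Nat.sub_add_cancel (by omega : 1 ≤ p), sub_self]
    have hf0 : f 0 = 0 := by simp [hf, zero_pow (by omega : p ≠ 0)]
    -- kernel elements
    have hker : ∀ k : ℕ, (k • β) ∈ V ∧ f (k • β) = 0 := by
      intro k
      induction k with
      | zero => simpa using ⟨hzero, hf0⟩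
      | succ k ihk =>
        rw [succ_nsmul]
        exact ⟨hadd _ ihk.1 _ hβV, by rw [hfadd, ihk.2, hfβ, add_zero]⟩
    set W : Finset L := V.image f with hW
    have hW0 : (0 : L) ∈ W := by
      rw [hW, Finset.mem_image]; exact ⟨0, hzero, hf0⟩
    have hWadd : ∀ x ∈ W, ∀ y ∈ W, x + y ∈ W := by
      intro x hx y hy
      rw [hW, Finset.mem_image] at hx hy ⊢
      obtain ⟨a, ha, rfl⟩ := hx; obtain ⟨b, hb, rfl⟩ := hy
      exact ⟨a + b, hadd a ha b hb, hfadd a b⟩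
    have hWcard : W.card < N := by
      have hsub : W ⊆ (V.erase β).image f := by
        intro x hx
        rw [hW, Finset.mem_image] at hx
        obtain ⟨a, ha, rfl⟩ := hx
        rcases eq_or_ne a β with rfl | hne
        · rw [hfβ, Finset.mem_image]
          refine ⟨0, Finset.mem_erase.mpr ⟨(Ne.symm hβ0), hzero⟩, hf0⟩
        · exact Finset.mem_image_of_mem f (Finset.mem_erase.mpr ⟨hne, ha⟩)
      calc W.card ≤ ((V.erase β).image f).card := Finset.card_le_card hsub
        _ ≤ (V.erase β).card := Finset.card_image_le
        _ < V.card := Finset.card_erase_lt_of_mem hβV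
        _ = N := hcard
    -- fiberwise factorization
    set S : L[X] := X ^ p - C c * X with hS
    have hSmonic : S.Monic := by
      apply monic_X_pow_sub
      calc (C c * X).degree ≤ 1 := by
            simpa using degree_C_mul_X_le c
        _ < (p : WithBot ℕ) := by exact_mod_cast Nat.one_lt_cast.mpr (by omega)
    have fiber : ∀ γ ∈ W, X ^ p - C c * X - C γ =
        ∏ α ∈ V.filter (fun α => f α = γ), (X - C α) := by
      intro γ hγ
      rw [hW, Finset.mem_image] at hγ
      obtain ⟨α0, hα0V, hα0⟩ := hγ
      set F : Finset L := V.filter (fun α => f α = γ) with hF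
      set R : L[X] := X ^ p - C c * X - C γ with hR
      have hRmonic : R.Monic := by
        have : R = X ^ p - (C c * X + C γ) := by rw [hR]; ring
        rw [this]
        apply monic_X_pow_sub
        calc (C c * X + C γ).degree ≤ 1 := by
              refine le_trans (degree_add_le _ _) (max_le ?_ ?_)
              · simpa using degree_C_mul_X_le c
              · exact le_trans (degree_C_le) (by norm_num)
          _ < (p : WithBot ℕ) := by exact_mod_cast Nat.one_lt_cast.mpr (by omega)
      have hRdeg : R.natDegree = p := by
        have : R = X ^ p - (C c * X + C γ) := by rw [hR]; ring
        rw [this]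
        rw [natDegree_sub_eq_left_of_natDegree_lt]
        · exact natDegree_X_pow p
        · rw [natDegree_X_pow]
          calc (C c * X + C γ).natDegree ≤ 1 := by
                refine le_trans (natDegree_add_le _ _) (max_le ?_ ?_)
                · exact natDegree_C_mul_le c X |>.trans (by simp)
                · simp
            _ < p := by omega
      -- each element of F is a root of R
      have hroot : ∀ α ∈ F, IsRoot R α := by
        intro α hα
        rw [hF, Finset.mem_filter] at hα
        have : f α = γ := hα.2
        simp only [IsRoot, hR, eval_sub, eval_pow, eval_mul, eval_C, eval_X]
        rw [show α ^ p - c * α = f α from rfl, this, sub_self]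
      -- the fiber has at least p elements
      have himg : (Finset.range p).image (fun k => α0 + k • β) ⊆ F := by
        intro x hx
        rw [Finset.mem_image] at hx
        obtain ⟨k, _, rfl⟩ := hx
        rw [hF, Finset.mem_filter]
        exact ⟨hadd _ hα0V _ (hker k).1, by rw [hfadd, (hker k).2, add_zero, hα0]⟩
      have hinj : Set.InjOn (fun k : ℕ => α0 + k • β) (Finset.range p) := by
        intro k1 hk1 k2 hk2 h
        simp only at h
        have : (k1 : L) * β = (k2 : L) * β := by
          rw [← nsmul_eq_mul, ← nsmul_eq_mul]
          exact add_left_cancel h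
        have hcast : (k1 : L) = (k2 : L) := mul_right_cancel₀ hβ0 this
        have := CharP.natCast_injOn_Iio L p
        exact this (by simpa using Finset.mem_range.mp hk1)
          (by simpa using Finset.mem_range.mp hk2) hcast
      have hFcard : p ≤ F.card := by
        calc p = ((Finset.range p).image (fun k => α0 + k • β)).card := by
              rw [Finset.card_image_of_injOn hinj, Finset.card_range]
          _ ≤ F.card := Finset.card_le_card himg
      -- the product of linear factors divides R
      have hdvd : (∏ α ∈ F, (X - C α)) ∣ R := by
        apply Finset.prod_dvd_of_coprime
        · intro a ha b hb hab
          exact isCoprime_X_sub_C_of_isUnit_sub (IsUnit.mk0 _ (sub_ne_zero.mpr hab))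
        · intro α hα
          exact dvd_iff_isRoot.mpr (hroot α hα)
      have hprodmonic : (∏ α ∈ F, (X - C α)).Monic :=
        monic_prod_of_monic _ _ (fun α _ => monic_X_sub_C α)
      have hproddeg : (∏ α ∈ F, (X - C α)).natDegree = F.card := by
        rw [natDegree_prod _ _ (fun α _ => X_sub_C_ne_zero α)]
        simp [natDegree_X_sub_C]
      exact eq_of_monic_of_dvd_of_natDegree_le hprodmonic hRmonic hdvd
        (by rw [hproddeg, hRdeg] at *; omega)
    -- now assemble
    obtain ⟨m, b, hIH⟩ := ih W.card hWcard W rfl hW0 hWadd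
    have hfiberwise : ∏ α ∈ V, (X - C α) =
        ∏ γ ∈ W, (X ^ p - C c * X - C γ) := by
      rw [← Finset.prod_fiberwise_of_maps_to (fun α hα => Finset.mem_image_of_mem f hα)
        (fun α => X - C α)]
      exact Finset.prod_congr rfl (fun γ hγ => (fiber γ hγ).symm)
    have hcomp : ∏ γ ∈ W, (X ^ p - C c * X - C γ) =
        (∏ γ ∈ W, (X - C γ)).comp S := by
      rw [prod_comp]
      exact Finset.prod_congr rfl (fun γ _ => by rw [sub_comp, X_comp, C_comp, hS])
    have hSpow : ∀ i : ℕ, S ^ (p ^ i) = X ^ (p ^ (i + 1)) - C (c ^ (p ^ i)) * X ^ (p ^ i) := by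
      intro i
      rw [hS, sub_pow_char_pow, mul_pow, ← C_pow, ← pow_mul, ← pow_succ']
    have hTS : ∏ α ∈ V, (X - C α) =
        ∑ i ∈ Finset.range (m + 1), C (b i) * (X ^ (p ^ (i + 1)) - C (c ^ (p ^ i)) * X ^ (p ^ i)) := by
      rw [hfiberwise, hcomp, hIH]
      rw [sum_comp]
      exact Finset.sum_congr rfl (fun i _ => by
        rw [mul_comp, C_comp, X_pow_comp, hSpow i])
    refine ⟨m + 1, fun i => (if i < m + 1 then -(b i * c ^ (p ^ i)) else 0) +
      (if i = 0 then 0 else b (i - 1)), ?_⟩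
    rw [hTS]
    simp only [C_add]
    rw [Finset.sum_congr rfl (fun i _ => add_mul _ _ _), Finset.sum_add_distrib]
    have h1 : ∑ i ∈ Finset.range (m + 1 + 1),
        C (if i < m + 1 then -(b i * c ^ (p ^ i)) else 0) * X ^ (p ^ i)
        = ∑ i ∈ Finset.range (m + 1), -(C (b i * c ^ (p ^ i)) * X ^ (p ^ i)) := by
      rw [Finset.sum_range_succ, if_neg (lt_irrefl (m + 1)), C_0, zero_mul, add_zero]
      exact Finset.sum_congr rfl (fun i hi => by
        rw [if_pos (Finset.mem_range.mp hi), map_neg, neg_mul])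
    have h2 : ∑ i ∈ Finset.range (m + 1 + 1),
        C (if i = 0 then 0 else b (i - 1)) * X ^ (p ^ i)
        = ∑ i ∈ Finset.range (m + 1), C (b i) * X ^ (p ^ (i + 1)) := by
      rw [Finset.sum_range_succ' (fun i => C (if i = 0 then 0 else b (i - 1)) * X ^ (p ^ i)) (m + 1)]
      simp only [Nat.succ_ne_zero, if_neg, Nat.add_sub_cancel, if_pos, C_0, zero_mul, add_zero,
        reduceIte]
    rw [h1, h2]
    rw [← Finset.sum_add_distrib]
    exact Finset.sum_congr rfl (fun i _ => by rw [mul_sub, map_mul]; ring)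
open Polynomial

lemma fixed_mem_range (K : Type) [Field K] [PerfectField K]
    (x : AlgebraicClosure K)
    (hx : ∀ σ : AlgebraicClosure K ≃ₐ[K] AlgebraicClosure K, σ x = x) :
    ∃ k : K, algebraMap K (AlgebraicClosure K) k = x := by
  classical
  have halg : IsAlgebraic K x := Algebra.IsAlgebraic.isAlgebraic x
  have hint : IsIntegral K x := halg.isIntegral
  have hsep : (minpoly K x).Separable := Algebra.IsSeparable.isSeparable K x
  have hsplit : Splits ((minpoly K x).map (algebraMap K (AlgebraicClosure K))) :=
    Normal.splits inferInstance x
  set q : (AlgebraicClosure K)[X] := (minpoly K x).map (algebraMap K (AlgebraicClosure K)) with hq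
  have hyall : ∀ y ∈ q.roots, y = x := by
    intro y hy
    have h_ev : (Polynomial.aeval y) (minpoly K x) = 0 := by
      have := (mem_roots'.mp hy).2
      rwa [IsRoot, eval_map, ← aeval_def] at this
    obtain ⟨σ, hσ⟩ := minpoly.exists_algEquiv_of_root halg h_ev
    exact σ.injective (by rw [hσ, hx σ])
  have hrep : q.roots = Multiset.replicate (Multiset.card q.roots) x :=
    Multiset.eq_replicate_of_mem hyall
  have hnodup : q.roots.Nodup := nodup_roots (hsep.map)
  have hcard1 : Multiset.card q.roots ≤ 1 := by
    have := Multiset.nodup_iff_count_le_one.mp hnodup x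
    rwa [hrep, Multiset.count_replicate_self] at this
  have hdeg := hsplit.natDegree_eq_card_roots
  rw [natDegree_map] at hdeg
  have hpos : 0 < (minpoly K x).natDegree := minpoly.natDegree_pos hint
  have hdeg1 : (minpoly K x).natDegree = 1 := by omega
  have : (minpoly K x).degree = 1 := by
    rw [degree_eq_natDegree (minpoly.ne_zero hint), hdeg1]; rfl
  obtain ⟨k, hk⟩ := minpoly.degree_eq_one_iff.mp this
  exact ⟨k, hk⟩

/-- Let `K` be a perfect field of characteristic `p > 0` and `V ⊂ K̄` a finite
`𝔽_p`-subspace (equivalently, in characteristic `p`, a finite additive subgroup)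
stable under `Gal(K̄/K)`.  Then `T(x) := ∏_{α∈V} (x - α)` is an additive polynomial
with coefficients in `K`: `T(x) = ∑_{i=0}^n a_i x^{p^i}` with `a_i ∈ K` and `a₀ ≠ 0`. -/
theorem stmt_12 (K : Type) [Field K] [PerfectField K] (p : ℕ) [Fact p.Prime] [CharP K p]
    (V : Finset (AlgebraicClosure K))
    (hzero : (0 : AlgebraicClosure K) ∈ V)
    (hadd : ∀ x ∈ V, ∀ y ∈ V, x + y ∈ V)
    (hneg : ∀ x ∈ V, -x ∈ V)
    (hgal : ∀ σ : AlgebraicClosure K ≃ₐ[K] AlgebraicClosure K, ∀ x ∈ V, σ x ∈ V)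
    (T : (AlgebraicClosure K)[X]) (hT : T = ∏ α ∈ V, (X - C α)) :
    (∀ x y : AlgebraicClosure K, T.eval (x + y) = T.eval x + T.eval y) ∧
    ∃ (n : ℕ) (a : Fin (n + 1) → K), a 0 ≠ 0 ∧
      T = ∑ i : Fin (n + 1), C (algebraMap K (AlgebraicClosure K) (a i)) * X ^ (p ^ (i : ℕ)) := by
  classical
  haveI : CharP (AlgebraicClosure K) p :=
    charP_of_injective_algebraMap (algebraMap K (AlgebraicClosure K)).injective p
  have hp2 : 2 ≤ p := (Fact.out : p.Prime).two_le
  obtain ⟨n, b, hsum⟩ :=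
    key_lemma (AlgebraicClosure K) p V.card V rfl hzero hadd
  have hTsum : T = ∑ i ∈ Finset.range (n + 1), C (b i) * X ^ (p ^ i) := hT.trans hsum
  -- additivity
  have hadditive : ∀ x y : AlgebraicClosure K, T.eval (x + y) = T.eval x + T.eval y := by
    intro x y
    rw [hTsum]
    simp only [eval_finset_sum, eval_mul, eval_pow, eval_C, eval_X]
    rw [← Finset.sum_add_distrib]
    exact Finset.sum_congr rfl (fun i _ => by rw [add_pow_char_pow, mul_add])
  -- coefficients
  have hcoeff : ∀ j ∈ Finset.range (n + 1), T.coeff (p ^ j) = b j := by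
    intro j hj
    rw [hTsum, finset_sum_coeff]
    rw [Finset.sum_eq_single_of_mem j hj]
    · rw [coeff_C_mul, coeff_X_pow, if_pos rfl, mul_one]
    · intro i _ hij
      rw [coeff_C_mul, coeff_X_pow, if_neg, mul_zero]
      exact fun h => hij (Nat.pow_right_injective hp2 h.symm)
  -- Galois stability of T
  have hmapT : ∀ σ : AlgebraicClosure K ≃ₐ[K] AlgebraicClosure K,
      T.map σ.toAlgHom.toRingHom = T := by
    intro σ
    have himage : V.image σ = V := by
      apply Finset.eq_of_subset_of_card_le
      · intro x hx
        rw [Finset.mem_image] at hx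
        obtain ⟨a, ha, rfl⟩ := hx
        exact hgal σ a ha
      · rw [Finset.card_image_of_injective _ σ.injective]
    rw [hT, Polynomial.map_prod]
    simp only [Polynomial.map_sub, map_X, map_C]
    conv_rhs => rw [← himage]
    rw [Finset.prod_image (fun a _ b _ h => σ.injective h)]
    rfl
  have hfixed : ∀ j : ℕ, ∀ σ : AlgebraicClosure K ≃ₐ[K] AlgebraicClosure K,
      σ (T.coeff j) = T.coeff j := by
    intro j σ
    conv_rhs => rw [← hmapT σ]
    rw [coeff_map]
    rfl
  have hbfix : ∀ j ∈ Finset.range (n + 1),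
      ∃ k : K, algebraMap K (AlgebraicClosure K) k = b j := by
    intro j hj
    have := fixed_mem_range K (T.coeff (p ^ j)) (fun σ => hfixed (p ^ j) σ)
    rwa [hcoeff j hj] at this
  -- b 0 ≠ 0 : separability
  have hb0 : b 0 ≠ 0 := by
    intro h0
    have hsep : (∏ α ∈ V, (X - C α)).Separable :=
      separable_prod_X_sub_C_iff'.mpr (fun x _ y _ h => h)
    rw [← hT] at hsep
    have hder : derivative T = C (b 0) := by
      rw [hTsum, derivative_sum]
      rw [Finset.sum_eq_single_of_mem 0 (Finset.mem_range.mpr (by omega))]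
      · rw [derivative_C_mul_X_pow]
        simp
      · intro i _ hi
        rw [derivative_C_mul_X_pow]
        have : ((p ^ i : ℕ) : AlgebraicClosure K) = 0 := by
          rw [Nat.cast_pow, CharP.cast_eq_zero, zero_pow hi]
        rw [this, mul_zero, map_zero, zero_mul]
    have hunit : IsUnit T := by
      have := hsep
      rw [Polynomial.Separable, hder, h0, map_zero] at this
      exact isCoprime_zero_right.mp this
    have hdegT : T.natDegree = V.card := by
      rw [hT, natDegree_prod _ _ (fun α _ => X_sub_C_ne_zero α)]
      simp [natDegree_X_sub_C]
    have h1 : 1 ≤ V.card := Finset.one_le_card.mpr ⟨0, hzero⟩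
    have := natDegree_eq_zero_of_isUnit hunit
    omega
  -- choose coefficients in K
  set a : Fin (n + 1) → K := fun i =>
    Classical.choose (hbfix i (Finset.mem_range.mpr i.isLt)) with ha
  have haspec : ∀ i : Fin (n + 1),
      algebraMap K (AlgebraicClosure K) (a i) = b i :=
    fun i => Classical.choose_spec (hbfix i (Finset.mem_range.mpr i.isLt))
  refine ⟨hadditive, n, a, ?_, ?_⟩
  · intro h
    apply hb0
    have := haspec 0
    rw [h, map_zero] at this
    exact this.symm
  · rw [hTsum, ← Fin.sum_univ_eq_sum_range (fun i => C (b i) * X ^ (p ^ i)) (n + 1)]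
    exact Finset.sum_congr rfl (fun i _ => by rw [haspec i])
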